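/- Let α = {A_1^{μ_1}, …, A_s^{μ_s}} be an element of Π̂_n^k with α ≠ 1̂, and set μ(α) := μ_1 + ⋯ + μ_s. Then: (1) the closed interval [α, 1̂] in Π̂_n^k is isomorphic as a poset to Π̂_s^k; (2) for every ν ∈ wcomp_{n−1} with supp(ν) ⊆ [k] such that ν − μ(α) is a weak composition lying in wcomp_{s−1}, the interval [α, [n]^ν] is isomorphic to the interval [0̂, [s]^{ν−μ(α)}] in Π_s^k; (3) the interval [0̂, α] is isomorphic to the direct product of posets [0̂, [|A_1|]^{μ_1}] × ⋯ × [0̂, [|A_s|]^{μ_s}], where [0̂, [|A_i|]^{μ_i}] is a maximal interval of Π_{|A_i|}^k. -/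

import Mathlib

/-! Weighted partition poset Π_n^k (raw representation).
Elements of [n] are represented by `Fin n` (the element j+1 ↔ index j) and
colors 1,…,k are represented by `Fin k` (color i+1 ↔ index i). -/

abbrev WP (n k : ℕ) := Finset (Finset (Fin n) × (Fin k → ℕ))

namespace WP

variable {n k : ℕ}

/-- total weight `|μ|` of a weight vector supported in `[k]`. -/
def wsum (w : Fin k → ℕ) : ℕ := ∑ i, w i

/-- the raw finset is a genuine weighted partition of `[n]`. -/
def IsWP (π : WP n k) : Prop :=
  (∀ p ∈ π, p.1.Nonempty) ∧
  (∀ p ∈ π, ∀ q ∈ π, p ≠ q → Disjoint p.1 q.1) ∧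
  (∀ x : Fin n, ∃ p ∈ π, x ∈ p.1) ∧
  (∀ p ∈ π, wsum p.2 + 1 = p.1.card)

/-- the order relation of `Π_n^k`. -/
def le (π ρ : WP n k) : Prop :=
  IsWP π ∧ IsWP ρ ∧
  (∀ p ∈ π, ∃ q ∈ ρ, p.1 ⊆ q.1) ∧
  (∀ q ∈ ρ,
    (∀ i, (∑ p ∈ π.filter (fun p => p.1 ⊆ q.1), p.2 i) ≤ q.2 i) ∧
    (∑ i, (q.2 i - ∑ p ∈ π.filter (fun p => p.1 ⊆ q.1), p.2 i))
      = (π.filter (fun p => p.1 ⊆ q.1)).card - 1)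

def lt (π ρ : WP n k) : Prop := le π ρ ∧ π ≠ ρ

/-- the minimum element `0̂` of `Π_n^k`. -/
def bot (n k : ℕ) : WP n k := Finset.univ.image (fun x => ({x}, fun _ => 0))

/-- the maximal element `[n]^μ` of `Π_n^k`. -/
def top (n k : ℕ) (f : Fin k → ℕ) : WP n k := {(Finset.univ, f)}

-- `mobiusAux r m` iterates the defining recursion of the Möbius function of the
-- relation `r`, `m` times.  For `m` at least the length of the interval `[a,b]` this
-- computes the Möbius function `μ̄(a,b)` of the poset.
open Classical in
noncomputable def mobiusAux {Q : Type*} (r : Q → Q → Prop) : ℕ → Q → Q → ℤ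
  | 0, a, b => if a = b then 1 else 0
  | m+1, a, b => if a = b then 1 else - ∑ᶠ c ∈ {c | r a c ∧ r c b ∧ c ≠ b}, mobiusAux r m a c

/-- the Möbius function `μ̄_{Π_n^k}` (intervals of `Π_n^k` have length at most `n`). -/
noncomputable def mobius (a b : WP n k) : ℤ := mobiusAux le n a b

end WP

namespace WP

/-- the total weight `μ(α) = μ₁ + ⋯ + μ_s` of a weighted partition. -/
def wtot {n k : ℕ} (α : WP n k) : Fin k → ℕ := fun i => ∑ p ∈ α, p.2 i

end WP

/-- `Π̂_n^k`: the poset `Π_n^k` with a maximum element `1̂` (= `none`) adjoined. -/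
def hatLE {n k : ℕ} (x y : Option (WP n k)) : Prop :=
  match x, y with
  | some a, some b => WP.le a b
  | _, none => True
  | none, some _ => False

/-- membership in `Π̂_n^k` -/
def IsWPHat {n k : ℕ} (x : Option (WP n k)) : Prop :=
  match x with
  | none => True
  | some a => WP.IsWP a

set_option linter.unusedSectionVars false
set_option linter.unusedVariables false
set_option maxHeartbeats 1000000


section Transport

variable {γ : Type*} [DecidableEq γ] {T : Finset γ} {m : ℕ} (e : {x // x ∈ T} ≃ Fin m)

def tup (c : Finset (Fin m)) : Finset γ := c.image (fun j => (e.symm j : γ))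

def tdown (S : Finset γ) : Finset (Fin m) :=
  Finset.univ.filter (fun j => (e.symm j : γ) ∈ S)

lemma mem_tup {c : Finset (Fin m)} {x : γ} :
    x ∈ tup e c ↔ ∃ j ∈ c, (e.symm j : γ) = x := Finset.mem_image

lemma mem_tdown {S : Finset γ} {j : Fin m} :
    j ∈ tdown e S ↔ (e.symm j : γ) ∈ S := by simp [tdown]

lemma tup_subset (c : Finset (Fin m)) : tup e c ⊆ T := by
  intro x hx
  obtain ⟨j, -, rfl⟩ := (mem_tup e).mp hx
  exact (e.symm j).2

lemma coe_symm_inj : Function.Injective (fun j : Fin m => (e.symm j : γ)) :=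
  Subtype.coe_injective.comp (e.symm.injective)

lemma tdown_tup (c : Finset (Fin m)) : tdown e (tup e c) = c := by
  ext j
  simp only [mem_tdown, mem_tup]
  constructor
  · rintro ⟨j', hj', h⟩
    rwa [← coe_symm_inj e h]
  · exact fun h => ⟨j, h, rfl⟩

lemma tup_tdown {S : Finset γ} (h : S ⊆ T) : tup e (tdown e S) = S := by
  ext x
  simp only [mem_tup, mem_tdown]
  constructor
  · rintro ⟨j, hj, rfl⟩; exact hj
  · intro hx
    exact ⟨e ⟨x, h hx⟩, by simp [hx], by simp⟩

lemma tup_inj {c c' : Finset (Fin m)} (h : tup e c = tup e c') : c = c' := by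
  rw [← tdown_tup e c, ← tdown_tup e c', h]

lemma tup_subset_tup {c c' : Finset (Fin m)} : tup e c ⊆ tup e c' ↔ c ⊆ c' := by
  constructor
  · intro h j hj
    have := h ((mem_tup e).mpr ⟨j, hj, rfl⟩)
    obtain ⟨j', hj', hh⟩ := (mem_tup e).mp this
    rwa [← coe_symm_inj e hh]
  · intro h x hx
    obtain ⟨j, hj, rfl⟩ := (mem_tup e).mp hx
    exact (mem_tup e).mpr ⟨j, h hj, rfl⟩

lemma tdown_subset_tdown {S S' : Finset γ} (hS : S ⊆ T) :
    tdown e S ⊆ tdown e S' ↔ S ⊆ S' := by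
  constructor
  · intro h x hx
    have hm : e ⟨x, hS hx⟩ ∈ tdown e S := (mem_tdown e).mpr (by simpa using hx)
    simpa using (mem_tdown e).mp (h hm)
  · intro h j hj
    exact (mem_tdown e).mpr (h ((mem_tdown e).mp hj))

lemma card_tup (c : Finset (Fin m)) : (tup e c).card = c.card :=
  Finset.card_image_of_injective _ (coe_symm_inj e)

lemma card_tdown {S : Finset γ} (h : S ⊆ T) : (tdown e S).card = S.card := by
  rw [← tup_tdown e h, tdown_tup, ← tup_tdown e h, card_tup]

lemma tup_nonempty {c : Finset (Fin m)} : (tup e c).Nonempty ↔ c.Nonempty :=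
  Finset.image_nonempty

lemma disjoint_tup {c c' : Finset (Fin m)} :
    Disjoint (tup e c) (tup e c') ↔ Disjoint c c' := by
  constructor
  · intro h
    rw [Finset.disjoint_left] at h ⊢
    intro j hj hj'
    exact h ((mem_tup e).mpr ⟨j, hj, rfl⟩) ((mem_tup e).mpr ⟨j, hj', rfl⟩)
  · intro h
    rw [Finset.disjoint_left] at h ⊢
    intro x hx hx'
    obtain ⟨j, hj, rfl⟩ := (mem_tup e).mp hx
    obtain ⟨j', hj', hh⟩ := (mem_tup e).mp hx'
    exact h hj (by rwa [← coe_symm_inj e hh])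

lemma sum_tup {M : Type*} [AddCommMonoid M] (c : Finset (Fin m)) (f : γ → M) :
    ∑ x ∈ tup e c, f x = ∑ j ∈ c, f (e.symm j : γ) :=
  Finset.sum_image (fun x _ y _ h => coe_symm_inj e h)

lemma sum_tdown {M : Type*} [AddCommMonoid M] {S : Finset γ} (h : S ⊆ T) (f : γ → M) :
    ∑ j ∈ tdown e S, f (e.symm j : γ) = ∑ x ∈ S, f x := by
  conv_rhs => rw [← tup_tdown e h]
  rw [sum_tup]

end Transport

namespace WP

variable {n k : ℕ}

lemma isWP_bot : IsWP (bot n k) := by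
  refine ⟨?_, ?_, ?_, ?_⟩
  · intro p hp
    simp only [bot, Finset.mem_image] at hp
    obtain ⟨x, -, rfl⟩ := hp
    exact ⟨x, by simp⟩
  · intro p hp q hq hne
    simp only [bot, Finset.mem_image] at hp hq
    obtain ⟨x, -, rfl⟩ := hp
    obtain ⟨y, -, rfl⟩ := hq
    have : x ≠ y := by rintro rfl; exact hne rfl
    simp [Finset.disjoint_singleton, this, this.symm]
  · intro x
    exact ⟨({x}, fun _ => 0), by simp [bot], by simp⟩
  · intro p hp
    simp only [bot, Finset.mem_image] at hp
    obtain ⟨x, -, rfl⟩ := hp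
    simp [wsum]

lemma bot_filter_card (q : Finset (Fin n)) :
    ((bot n k).filter (fun p => p.1 ⊆ q)).card = q.card := by
  classical
  rw [bot, Finset.filter_image]
  rw [Finset.card_image_of_injOn]
  · congr 1
    ext x
    simp [Finset.singleton_subset_iff]
  · intro x _ y _ h
    simpa using congrArg (fun p => p.1) h

lemma le_bot_iff (z : WP n k) : le (bot n k) z ↔ IsWP z := by
  constructor
  · exact fun h => h.2.1
  · intro hz
    refine ⟨isWP_bot, hz, ?_, ?_⟩
    · intro p hp
      simp only [bot, Finset.mem_image] at hp
      obtain ⟨x, -, rfl⟩ := hp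
      obtain ⟨q, hq, hxq⟩ := hz.2.2.1 x
      exact ⟨q, hq, by simpa [Finset.singleton_subset_iff] using hxq⟩
    · intro q hq
      have hzero : ∀ i, (∑ p ∈ (bot n k).filter (fun p => p.1 ⊆ q.1), p.2 i) = 0 := by
        intro i
        apply Finset.sum_eq_zero
        intro p hp
        simp only [Finset.mem_filter, bot, Finset.mem_image] at hp
        obtain ⟨⟨x, -, rfl⟩, -⟩ := hp
        rfl
      refine ⟨fun i => by simp [hzero i], ?_⟩
      simp only [hzero, Nat.sub_zero, bot_filter_card]
      rw [← hz.2.2.2 q hq]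
      simp [wsum]

lemma isWP_top (hn : 1 ≤ n) (ν : Fin k → ℕ) (hν : wsum ν + 1 = n) : IsWP (top n k ν) := by
  refine ⟨?_, ?_, ?_, ?_⟩
  · intro p hp
    simp only [top, Finset.mem_singleton] at hp
    subst hp
    exact ⟨⟨0, hn⟩, by simp⟩
  · intro p hp q hq hne
    simp only [top, Finset.mem_singleton] at hp hq
    exact absurd (hp.trans hq.symm) hne
  · intro x
    exact ⟨(Finset.univ, ν), by simp [top], by simp⟩
  · intro p hp
    simp only [top, Finset.mem_singleton] at hp
    subst hp
    simpa using hν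

lemma le_top_iff (ν : Fin k → ℕ) (ht : IsWP (top n k ν)) (z : WP n k) :
    le z (top n k ν) ↔ IsWP z ∧ (∀ i, (∑ p ∈ z, p.2 i) ≤ ν i) ∧
      (∑ i, (ν i - ∑ p ∈ z, p.2 i)) = z.card - 1 := by
  have hfix : z.filter (fun p => p.1 ⊆ (Finset.univ : Finset (Fin n))) = z := by
    apply Finset.filter_true_of_mem; intro p _; exact Finset.subset_univ _
  constructor
  · rintro ⟨hz, -, -, h4⟩
    obtain ⟨h1, h2⟩ := h4 (Finset.univ, ν) (by simp [top])
    rw [hfix] at h1 h2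
    exact ⟨hz, h1, h2⟩
  · rintro ⟨hz, h1, h2⟩
    refine ⟨hz, ht, ?_, ?_⟩
    · intro p _; exact ⟨(Finset.univ, ν), by simp [top], Finset.subset_univ _⟩
    · intro q hq
      simp only [top, Finset.mem_singleton] at hq
      subst hq
      rw [hfix]
      exact ⟨h1, h2⟩

end WP

namespace WP

noncomputable section Contract

variable {n k : ℕ} (α : WP n k)

/-- the `j`-th block of `α` (as a pair). -/
def blk (j : Fin α.card) : Finset (Fin n) × (Fin k → ℕ) :=
  (α.equivFin.symm j : Finset (Fin n) × (Fin k → ℕ))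

lemma blk_mem (j : Fin α.card) : blk α j ∈ α := (α.equivFin.symm j).2

lemma blk_inj {j j' : Fin α.card} (h : blk α j = blk α j') : j = j' :=
  coe_symm_inj α.equivFin h

lemma exists_blk {p} (hp : p ∈ α) : ∃ j, blk α j = p :=
  ⟨α.equivFin ⟨p, hp⟩, by simp [blk]⟩

def bUp (c : Finset (Fin α.card)) : Finset (Fin n) := c.biUnion (fun j => (blk α j).1)

def bDown (S : Finset (Fin n)) : Finset (Fin α.card) :=
  Finset.univ.filter (fun j => (blk α j).1 ⊆ S)

lemma mem_bUp {c x} : x ∈ bUp α c ↔ ∃ j ∈ c, x ∈ (blk α j).1 := Finset.mem_biUnion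

lemma mem_bDown {S j} : j ∈ bDown α S ↔ (blk α j).1 ⊆ S := by simp [bDown]

variable {α}

lemma blk_idx_unique (hα : IsWP α) {j j' : Fin α.card} {x : Fin n}
    (h : x ∈ (blk α j).1) (h' : x ∈ (blk α j').1) : j = j' := by
  by_contra hne
  have hne' : blk α j ≠ blk α j' := fun hh => hne (blk_inj _ hh)
  exact Finset.disjoint_left.mp (hα.2.1 _ (blk_mem α j) _ (blk_mem α j') hne') h h'

lemma bUp_bDown_subset (S : Finset (Fin n)) : bUp α (bDown α S) ⊆ S := by
  intro x hx
  obtain ⟨j, hj, hxj⟩ := (mem_bUp α).mp hx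
  exact (mem_bDown α).mp hj hxj

lemma bDown_bUp (hα : IsWP α) (c : Finset (Fin α.card)) : bDown α (bUp α c) = c := by
  ext j
  rw [mem_bDown]
  constructor
  · intro h
    obtain ⟨x, hx⟩ := hα.1 _ (blk_mem α j)
    obtain ⟨j', hj', hxj'⟩ := (mem_bUp α).mp (h hx)
    rwa [blk_idx_unique hα hx hxj']
  · intro hj x hx
    exact (mem_bUp α).mpr ⟨j, hj, hx⟩

lemma bUp_mono {c c' : Finset (Fin α.card)} (h : c ⊆ c') : bUp α c ⊆ bUp α c' :=
  Finset.biUnion_subset_biUnion_of_subset_left _ h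

lemma bDown_mono {S S' : Finset (Fin n)} (h : S ⊆ S') : bDown α S ⊆ bDown α S' := by
  intro j hj
  exact (mem_bDown α).mpr ((mem_bDown α).mp hj |>.trans h)

lemma disjoint_bDown (hα : IsWP α) {S S' : Finset (Fin n)} (h : Disjoint S S') :
    Disjoint (bDown α S) (bDown α S') := by
  rw [Finset.disjoint_left]
  intro j hj hj'
  obtain ⟨x, hx⟩ := hα.1 _ (blk_mem α j)
  exact Finset.disjoint_left.mp h ((mem_bDown α).mp hj hx) ((mem_bDown α).mp hj' hx)

lemma disjoint_bUp (hα : IsWP α) {c c' : Finset (Fin α.card)} (h : Disjoint c c') :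
    Disjoint (bUp α c) (bUp α c') := by
  rw [Finset.disjoint_left]
  intro x hx hx'
  obtain ⟨j, hj, hxj⟩ := (mem_bUp α).mp hx
  obtain ⟨j', hj', hxj'⟩ := (mem_bUp α).mp hx'
  rw [blk_idx_unique hα hxj hxj'] at hj
  exact Finset.disjoint_left.mp h hj hj'

lemma card_bUp (hα : IsWP α) (c : Finset (Fin α.card)) :
    (bUp α c).card = ∑ j ∈ c, (blk α j).1.card := by
  apply Finset.card_biUnion
  intro j _ j' _ hne
  by_contra hd
  rw [Finset.not_disjoint_iff] at hd
  obtain ⟨x, hx, hx'⟩ := hd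
  exact hne (blk_idx_unique hα hx hx')

lemma bDown_eq_tdown (S : Finset (Fin n)) :
    bDown α S = tdown α.equivFin (α.filter (fun p => p.1 ⊆ S)) := by
  ext j
  rw [mem_bDown, mem_tdown, Finset.mem_filter]
  exact ⟨fun h => ⟨blk_mem α j, h⟩, fun h => h.2⟩

lemma sum_bDown {M : Type*} [AddCommMonoid M] (S : Finset (Fin n))
    (f : Finset (Fin n) × (Fin k → ℕ) → M) :
    ∑ j ∈ bDown α S, f (blk α j) = ∑ p ∈ α.filter (fun p => p.1 ⊆ S), f p := by
  rw [bDown_eq_tdown]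
  exact sum_tdown α.equivFin (Finset.filter_subset _ _) f

lemma card_bDown (S : Finset (Fin n)) :
    (bDown α S).card = (α.filter (fun p => p.1 ⊆ S)).card := by
  rw [bDown_eq_tdown]
  exact card_tdown α.equivFin (Finset.filter_subset _ _)

/-- saturation: blocks of coarser partitions are unions of `α`-blocks. -/
lemma sat_of_le {β : WP n k} (h : le α β) {q} (hq : q ∈ β) :
    bUp α (bDown α q.1) = q.1 := by
  obtain ⟨hα, hβ, href, -⟩ := h
  apply Finset.Subset.antisymm (bUp_bDown_subset _)
  intro x hx
  obtain ⟨p, hp, hxp⟩ := hα.2.2.1 x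
  obtain ⟨q', hq', hpq'⟩ := href p hp
  have : q' = q := by
    by_contra hne
    exact Finset.disjoint_left.mp (hβ.2.1 _ hq' _ hq hne) (hpq' hxp) hx
  subst this
  obtain ⟨j, rfl⟩ := exists_blk _ hp
  exact (mem_bUp α).mpr ⟨j, (mem_bDown α).mpr hpq', hxp⟩

lemma filter_nonempty_of_le {β : WP n k} (h : le α β) {q} (hq : q ∈ β) :
    (α.filter (fun p => p.1 ⊆ q.1)).Nonempty := by
  obtain ⟨x, hx⟩ := h.2.1.1 _ hq
  obtain ⟨p, hp, hxp⟩ := h.1.2.2.1 x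
  obtain ⟨q', hq', hpq'⟩ := h.2.2.1 p hp
  have : q' = q := by
    by_contra hne
    exact Finset.disjoint_left.mp (h.2.1.2.1 _ hq' _ hq hne) (hpq' hxp) hx
  subst this
  exact ⟨p, Finset.mem_filter.mpr ⟨hp, hpq'⟩⟩

lemma bDown_nonempty_of_le {β : WP n k} (h : le α β) {q} (hq : q ∈ β) :
    (bDown α q.1).Nonempty := by
  rw [← Finset.card_pos, card_bDown, Finset.card_pos]
  exact filter_nonempty_of_le h hq

/-- contraction of a single block. -/
def cmap (q : Finset (Fin n) × (Fin k → ℕ)) : Finset (Fin α.card) × (Fin k → ℕ) :=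
  (bDown α q.1, fun i => q.2 i - ∑ p ∈ α.filter (fun p => p.1 ⊆ q.1), p.2 i)

/-- expansion of a single block. -/
def emap (c : Finset (Fin α.card) × (Fin k → ℕ)) : Finset (Fin n) × (Fin k → ℕ) :=
  (bUp α c.1, fun i => c.2 i + ∑ j ∈ c.1, (blk α j).2 i)

variable (α)

def contract (β : WP n k) : WP α.card k := β.image (cmap (α := α))

def expand (γ : WP α.card k) : WP n k := γ.image (emap (α := α))

variable {α}

lemma emap_cmap {β : WP n k} (h : le α β) {q} (hq : q ∈ β) :
    emap (α := α) (cmap (α := α) q) = q := by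
  have hle := (h.2.2.2 q hq).1
  refine Prod.ext ?_ ?_
  · exact sat_of_le h hq
  · funext i
    show (q.2 i - _) + (∑ j ∈ bDown α q.1, (blk α j).2 i) = q.2 i
    rw [sum_bDown (f := fun p => p.2 i)]
    exact Nat.sub_add_cancel (hle i)

lemma cmap_emap (hα : IsWP α) {c} :
    cmap (α := α) (emap (α := α) c) = c := by
  refine Prod.ext ?_ ?_
  · exact bDown_bUp hα c.1
  · funext i
    show (c.2 i + ∑ j ∈ c.1, (blk α j).2 i)
        - (∑ p ∈ α.filter (fun p => p.1 ⊆ bUp α c.1), p.2 i) = c.2 i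
    rw [← sum_bDown (f := fun p => p.2 i), bDown_bUp hα]
    simp

lemma expand_contract {β : WP n k} (h : le α β) : expand α (contract α β) = β := by
  rw [contract, expand, Finset.image_image]
  have he : β.image (emap (α := α) ∘ cmap (α := α)) = β.image id :=
    Finset.image_congr (fun q hq => emap_cmap h hq)
  rw [he, Finset.image_id]

lemma contract_expand (hα : IsWP α) {γ : WP α.card k} : contract α (expand α γ) = γ := by
  rw [contract, expand, Finset.image_image]
  have he : γ.image (cmap (α := α) ∘ emap (α := α)) = γ.image id :=
    Finset.image_congr (fun c hc => cmap_emap hα)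
  rw [he, Finset.image_id]

lemma cmap_injOn {β : WP n k} (h : le α β) :
    ∀ q ∈ β, ∀ q' ∈ β, cmap (α := α) q = cmap (α := α) q' → q = q' := by
  intro q hq q' hq' he
  rw [← emap_cmap h hq, ← emap_cmap h hq', he]

lemma card_contract {β : WP n k} (h : le α β) : (contract α β).card = β.card :=
  Finset.card_image_of_injOn (cmap_injOn h)

lemma sum_contract {M : Type*} [AddCommMonoid M] {β : WP n k} (h : le α β)
    (f : Finset (Fin α.card) × (Fin k → ℕ) → M) :
    ∑ c ∈ contract α β, f c = ∑ q ∈ β, f (cmap (α := α) q) :=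
  Finset.sum_image (cmap_injOn h)

lemma mem_contract {β : WP n k} {c} :
    c ∈ contract α β ↔ ∃ q ∈ β, cmap (α := α) q = c := Finset.mem_image

lemma mem_expand {γ : WP α.card k} {q} :
    q ∈ expand α γ ↔ ∃ c ∈ γ, emap (α := α) c = q := Finset.mem_image

end Contract

end WP
namespace WP

section Contract2

variable {n k : ℕ} {α : WP n k}

lemma dich_of_le {β β' : WP n k} (hβ' : IsWP β')
    (href : ∀ q ∈ β, ∃ q' ∈ β', q.1 ⊆ q'.1) {q'} (hq' : q' ∈ β') :
    ∀ q ∈ β, q.1 ⊆ q'.1 ∨ Disjoint q.1 q'.1 := by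
  intro q hq
  by_cases hd : Disjoint q.1 q'.1
  · exact Or.inr hd
  · left
    rw [Finset.not_disjoint_iff] at hd
    obtain ⟨x, hx, hx'⟩ := hd
    obtain ⟨q₀, hq₀, hsub⟩ := href q hq
    have : q₀ = q' := by
      by_contra hne
      exact Finset.disjoint_left.mp (hβ'.2.1 _ hq₀ _ hq' hne) (hsub hx) hx'
    exact this ▸ hsub

lemma filter_partition (hα : IsWP α) {β : WP n k} (hβ : IsWP β)
    (href : ∀ p ∈ α, ∃ q ∈ β, p.1 ⊆ q.1) {S : Finset (Fin n)}
    (hdich : ∀ q ∈ β, q.1 ⊆ S ∨ Disjoint q.1 S) :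
    α.filter (fun p => p.1 ⊆ S)
      = (β.filter (fun q => q.1 ⊆ S)).biUnion (fun q => α.filter (fun p => p.1 ⊆ q.1)) := by
  ext p
  rw [Finset.mem_biUnion, Finset.mem_filter]
  constructor
  · rintro ⟨hp, hpS⟩
    obtain ⟨q, hq, hpq⟩ := href p hp
    refine ⟨q, Finset.mem_filter.mpr ⟨hq, ?_⟩, Finset.mem_filter.mpr ⟨hp, hpq⟩⟩
    rcases hdich q hq with h | h
    · exact h
    · obtain ⟨x, hx⟩ := hα.1 p hp
      exact (Finset.disjoint_left.mp h (hpq hx) (hpS hx)).elim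
  · rintro ⟨q, hq, hp⟩
    rw [Finset.mem_filter] at hq hp
    exact ⟨hp.1, hp.2.trans hq.2⟩

lemma fibers_pd (hα : IsWP α) {β : WP n k} (hβ : IsWP β) (t : WP n k) (ht : t ⊆ β) :
    (t : Set (Finset (Fin n) × (Fin k → ℕ))).PairwiseDisjoint
      (fun q => α.filter (fun p => p.1 ⊆ q.1)) := by
  intro q hq q' hq' hne
  rw [Function.onFun, Finset.disjoint_left]
  intro p hp hp'
  rw [Finset.mem_filter] at hp hp'
  obtain ⟨x, hx⟩ := hα.1 p hp.1
  exact Finset.disjoint_left.mp (hβ.2.1 _ (ht hq) _ (ht hq') hne) (hp.2 hx) (hp'.2 hx)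

lemma sum_filter_partition {M : Type*} [AddCommMonoid M] (hα : IsWP α) {β : WP n k}
    (hβ : IsWP β) (href : ∀ p ∈ α, ∃ q ∈ β, p.1 ⊆ q.1) {S : Finset (Fin n)}
    (hdich : ∀ q ∈ β, q.1 ⊆ S ∨ Disjoint q.1 S) (f : Finset (Fin n) × (Fin k → ℕ) → M) :
    ∑ p ∈ α.filter (fun p => p.1 ⊆ S), f p
      = ∑ q ∈ β.filter (fun q => q.1 ⊆ S), ∑ p ∈ α.filter (fun p => p.1 ⊆ q.1), f p := by
  rw [filter_partition hα hβ href hdich,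
    Finset.sum_biUnion (fibers_pd hα hβ _ (Finset.filter_subset _ _))]

lemma isWP_contract {β : WP n k} (h : le α β) : IsWP (contract α β) := by
  have hα := h.1
  have hβ := h.2.1
  refine ⟨?_, ?_, ?_, ?_⟩
  · intro c hc
    obtain ⟨q, hq, rfl⟩ := mem_contract.mp hc
    exact bDown_nonempty_of_le h hq
  · intro c hc c' hc' hne
    obtain ⟨q, hq, rfl⟩ := mem_contract.mp hc
    obtain ⟨q', hq', rfl⟩ := mem_contract.mp hc'
    have hqq : q ≠ q' := fun e => hne (by rw [e])
    exact disjoint_bDown hα (hβ.2.1 q hq q' hq' hqq)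
  · intro j
    obtain ⟨q, hq, hpq⟩ := h.2.2.1 (blk α j) (blk_mem α j)
    exact ⟨cmap (α := α) q, mem_contract.mpr ⟨q, hq, rfl⟩, (mem_bDown α).mpr hpq⟩
  · intro c hc
    obtain ⟨q, hq, rfl⟩ := mem_contract.mp hc
    have h4 := (h.2.2.2 q hq).2
    have hpos : 0 < (α.filter (fun p => p.1 ⊆ q.1)).card :=
      Finset.card_pos.mpr (filter_nonempty_of_le h hq)
    show wsum _ + 1 = (bDown α q.1).card
    rw [card_bDown]
    have hw : wsum (cmap (α := α) q).2
        = (α.filter (fun p => p.1 ⊆ q.1)).card - 1 := h4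
    omega

lemma emap_injective (hα : IsWP α) : Function.Injective (emap (α := α)) := by
  intro c c' hcc
  rw [← cmap_emap hα (c := c), ← cmap_emap hα (c := c'), hcc]

lemma card_expand (hα : IsWP α) (γ : WP α.card k) : (expand α γ).card = γ.card :=
  Finset.card_image_of_injective _ (emap_injective hα)

lemma sum_expand {M : Type*} [AddCommMonoid M] (hα : IsWP α) (γ : WP α.card k)
    (f : Finset (Fin n) × (Fin k → ℕ) → M) :
    ∑ q ∈ expand α γ, f q = ∑ c ∈ γ, f (emap (α := α) c) :=
  Finset.sum_image (fun c _ c' _ hcc => emap_injective hα hcc)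

lemma filter_subset_bUp (hα : IsWP α) (c : Finset (Fin α.card)) :
    α.filter (fun p => p.1 ⊆ bUp α c) = tup α.equivFin c := by
  ext p
  rw [Finset.mem_filter, mem_tup]
  constructor
  · rintro ⟨hp, hsub⟩
    obtain ⟨x, hx⟩ := hα.1 p hp
    obtain ⟨j, hj, hxj⟩ := (mem_bUp α).mp (hsub hx)
    refine ⟨j, hj, ?_⟩
    show blk α j = p
    by_contra hne
    exact Finset.disjoint_left.mp (hα.2.1 _ (blk_mem α j) _ hp hne) hxj hx
  · rintro ⟨j, hj, rfl⟩
    exact ⟨blk_mem α j, fun x hx => (mem_bUp α).mpr ⟨j, hj, hx⟩⟩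

lemma sum_filter_bUp {M : Type*} [AddCommMonoid M] (hα : IsWP α) (c : Finset (Fin α.card))
    (f : Finset (Fin n) × (Fin k → ℕ) → M) :
    ∑ p ∈ α.filter (fun p => p.1 ⊆ bUp α c), f p = ∑ j ∈ c, f (blk α j) := by
  rw [filter_subset_bUp hα]
  exact sum_tup α.equivFin c f

lemma card_filter_bUp (hα : IsWP α) (c : Finset (Fin α.card)) :
    (α.filter (fun p => p.1 ⊆ bUp α c)).card = c.card := by
  rw [filter_subset_bUp hα]
  exact card_tup α.equivFin c

lemma isWP_expand (hα : IsWP α) {γ : WP α.card k} (hγ : IsWP γ) : IsWP (expand α γ) := by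
  refine ⟨?_, ?_, ?_, ?_⟩
  · intro q hq
    obtain ⟨c, hc, rfl⟩ := mem_expand.mp hq
    obtain ⟨j, hj⟩ := hγ.1 c hc
    obtain ⟨x, hx⟩ := hα.1 _ (blk_mem α j)
    exact ⟨x, (mem_bUp α).mpr ⟨j, hj, hx⟩⟩
  · intro q hq q' hq' hne
    obtain ⟨c, hc, rfl⟩ := mem_expand.mp hq
    obtain ⟨c', hc', rfl⟩ := mem_expand.mp hq'
    have hcc : c ≠ c' := fun e => hne (by rw [e])
    exact disjoint_bUp hα (hγ.2.1 c hc c' hc' hcc)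
  · intro x
    obtain ⟨p, hp, hxp⟩ := hα.2.2.1 x
    obtain ⟨j, rfl⟩ := exists_blk _ hp
    obtain ⟨c, hc, hjc⟩ := hγ.2.2.1 j
    exact ⟨emap (α := α) c, mem_expand.mpr ⟨c, hc, rfl⟩, (mem_bUp α).mpr ⟨j, hjc, hxp⟩⟩
  · intro q hq
    obtain ⟨c, hc, rfl⟩ := mem_expand.mp hq
    show wsum (fun i => c.2 i + ∑ j ∈ c.1, (blk α j).2 i) + 1 = (bUp α c.1).card
    have h1 : wsum (fun i => c.2 i + ∑ j ∈ c.1, (blk α j).2 i)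
        = wsum c.2 + ∑ j ∈ c.1, wsum (blk α j).2 := by
      rw [wsum, Finset.sum_add_distrib, Finset.sum_comm]
      rfl
    have h2 : (bUp α c.1).card = (∑ j ∈ c.1, wsum (blk α j).2) + c.1.card := by
      rw [card_bUp hα]
      rw [Finset.sum_congr rfl (fun j _ => (hα.2.2.2 _ (blk_mem α j)).symm)]
      rw [Finset.sum_add_distrib]
      simp
    have h3 := hγ.2.2.2 c hc
    omega

lemma le_alpha_expand (hα : IsWP α) {γ : WP α.card k} (hγ : IsWP γ) : le α (expand α γ) := by
  refine ⟨hα, isWP_expand hα hγ, ?_, ?_⟩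
  · intro p hp
    obtain ⟨j, rfl⟩ := exists_blk _ hp
    obtain ⟨c, hc, hjc⟩ := hγ.2.2.1 j
    exact ⟨emap (α := α) c, mem_expand.mpr ⟨c, hc, rfl⟩,
      fun x hx => (mem_bUp α).mpr ⟨j, hjc, hx⟩⟩
  · intro q hq
    obtain ⟨c, hc, rfl⟩ := mem_expand.mp hq
    constructor
    · intro i
      show (∑ p ∈ α.filter (fun p => p.1 ⊆ bUp α c.1), p.2 i)
        ≤ c.2 i + ∑ j ∈ c.1, (blk α j).2 i
      rw [sum_filter_bUp hα c.1 (f := fun p => p.2 i)]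
      exact Nat.le_add_left _ _
    · show (∑ i, ((c.2 i + ∑ j ∈ c.1, (blk α j).2 i)
          - ∑ p ∈ α.filter (fun p => p.1 ⊆ bUp α c.1), p.2 i))
        = (α.filter (fun p => p.1 ⊆ bUp α c.1)).card - 1
      rw [card_filter_bUp hα]
      have key : ∀ i : Fin k, (c.2 i + ∑ j ∈ c.1, (blk α j).2 i)
          - ∑ p ∈ α.filter (fun p => p.1 ⊆ bUp α c.1), p.2 i = c.2 i := by
        intro i
        rw [sum_filter_bUp hα c.1 (f := fun p => p.2 i)]
        omega
      rw [Finset.sum_congr rfl (fun i _ => key i)]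
      have h3 : (∑ i, c.2 i) + 1 = c.1.card := hγ.2.2.2 c hc
      exact Nat.eq_sub_of_add_eq h3

end Contract2

end WP
namespace WP

section Contract3

variable {n k : ℕ} {α : WP n k}

lemma contract_filter {β : WP n k} (h : le α β) {S : Finset (Fin n)}
    (hsat : bUp α (bDown α S) = S) :
    (contract α β).filter (fun c => c.1 ⊆ bDown α S)
      = (β.filter (fun q => q.1 ⊆ S)).image (cmap (α := α)) := by
  rw [contract, Finset.filter_image]
  congr 1
  apply Finset.filter_congr
  intro q hq
  show bDown α q.1 ⊆ bDown α S ↔ q.1 ⊆ S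
  constructor
  · intro hh
    calc q.1 = bUp α (bDown α q.1) := (sat_of_le h hq).symm
      _ ⊆ bUp α (bDown α S) := bUp_mono hh
      _ = S := hsat
  · exact bDown_mono
  -- (decidability side conditions, if any)

lemma sum_cmap_image {M : Type*} [AddCommMonoid M] {β : WP n k} (h : le α β)
    (t : WP n k) (ht : t ⊆ β) (f : Finset (Fin α.card) × (Fin k → ℕ) → M) :
    ∑ c ∈ t.image (cmap (α := α)), f c = ∑ q ∈ t, f (cmap (α := α) q) :=
  Finset.sum_image (fun q hq q' hq' e => cmap_injOn h q (ht hq) q' (ht hq') e)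

lemma card_cmap_image {β : WP n k} (h : le α β) (t : WP n k) (ht : t ⊆ β) :
    (t.image (cmap (α := α))).card = t.card :=
  Finset.card_image_of_injOn (fun q hq q' hq' e =>
    cmap_injOn h q (ht (Finset.mem_coe.mp hq)) q' (ht (Finset.mem_coe.mp hq')) e)

lemma sum_cmap_w {β : WP n k} (h : le α β) {S : Finset (Fin n)}
    (hdich : ∀ q ∈ β, q.1 ⊆ S ∨ Disjoint q.1 S) (i : Fin k) :
    ∑ q ∈ β.filter (fun q => q.1 ⊆ S), (cmap (α := α) q).2 i
      = (∑ q ∈ β.filter (fun q => q.1 ⊆ S), q.2 i)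
        - ∑ p ∈ α.filter (fun p => p.1 ⊆ S), p.2 i := by
  have hsub : ∀ q ∈ β.filter (fun q => q.1 ⊆ S),
      (∑ p ∈ α.filter (fun p => p.1 ⊆ q.1), p.2 i) ≤ q.2 i :=
    fun q hq => (h.2.2.2 q (Finset.mem_of_mem_filter q hq)).1 i
  show ∑ q ∈ β.filter (fun q => q.1 ⊆ S),
      (q.2 i - ∑ p ∈ α.filter (fun p => p.1 ⊆ q.1), p.2 i) = _
  rw [Finset.sum_tsub_distrib _ hsub]
  congr 1
  exact (sum_filter_partition h.1 h.2.1 h.2.2.1 hdich (fun p => p.2 i)).symm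

lemma tau_le_A {β : WP n k} (h : le α β) {S : Finset (Fin n)}
    (hdich : ∀ q ∈ β, q.1 ⊆ S ∨ Disjoint q.1 S) (i : Fin k) :
    (∑ p ∈ α.filter (fun p => p.1 ⊆ S), p.2 i)
      ≤ ∑ q ∈ β.filter (fun q => q.1 ⊆ S), q.2 i := by
  rw [sum_filter_partition h.1 h.2.1 h.2.2.1 hdich (fun p => p.2 i)]
  exact Finset.sum_le_sum (fun q hq => (h.2.2.2 q (Finset.mem_of_mem_filter q hq)).1 i)

lemma le_contract_of_le {β β' : WP n k} (h : le α β) (h' : le α β') (hbb : le β β') :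
    le (contract α β) (contract α β') := by
  refine ⟨isWP_contract h, isWP_contract h', ?_, ?_⟩
  · intro c hc
    obtain ⟨q, hq, rfl⟩ := mem_contract.mp hc
    obtain ⟨q', hq', hsub⟩ := hbb.2.2.1 q hq
    exact ⟨cmap (α := α) q', mem_contract.mpr ⟨q', hq', rfl⟩, bDown_mono hsub⟩
  · intro c' hc'
    obtain ⟨q', hq', rfl⟩ := mem_contract.mp hc'
    have hsat := sat_of_le h' hq'
    have hdich := dich_of_le h'.2.1 hbb.2.2.1 hq'
    have hfe : (contract α β).filter (fun c => c.1 ⊆ (cmap (α := α) q').1)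
        = (β.filter (fun q => q.1 ⊆ q'.1)).image (cmap (α := α)) := contract_filter h hsat
    have hsum : ∀ i, (∑ c ∈ (contract α β).filter (fun c => c.1 ⊆ (cmap (α := α) q').1), c.2 i)
        = (∑ q ∈ β.filter (fun q => q.1 ⊆ q'.1), q.2 i)
          - ∑ p ∈ α.filter (fun p => p.1 ⊆ q'.1), p.2 i := by
      intro i
      rw [hfe, sum_cmap_image h _ (Finset.filter_subset _ _) (f := fun c => c.2 i),
        sum_cmap_w h hdich i]
    have hcard : ((contract α β).filter (fun c => c.1 ⊆ (cmap (α := α) q').1)).card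
        = (β.filter (fun q => q.1 ⊆ q'.1)).card := by
      rw [hfe]
      exact card_cmap_image h _ (Finset.filter_subset _ _)
    constructor
    · intro i
      rw [hsum i]
      show _ ≤ q'.2 i - ∑ p ∈ α.filter (fun p => p.1 ⊆ q'.1), p.2 i
      exact Nat.sub_le_sub_right ((hbb.2.2.2 q' hq').1 i) _
    · rw [hcard]
      have key : ∀ i : Fin k, (cmap (α := α) q').2 i
          - (∑ c ∈ (contract α β).filter (fun c => c.1 ⊆ (cmap (α := α) q').1), c.2 i)
          = q'.2 i - ∑ q ∈ β.filter (fun q => q.1 ⊆ q'.1), q.2 i := by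
        intro i
        rw [hsum i]
        exact Nat.sub_sub_sub_cancel_right (tau_le_A h hdich i)
      rw [Finset.sum_congr rfl (fun i _ => key i)]
      exact (hbb.2.2.2 q' hq').2

lemma le_of_contract_le {β β' : WP n k} (h : le α β) (h' : le α β')
    (hcc : le (contract α β) (contract α β')) : le β β' := by
  have href : ∀ q ∈ β, ∃ q' ∈ β', q.1 ⊆ q'.1 := by
    intro q hq
    obtain ⟨c', hc', hsub⟩ := hcc.2.2.1 (cmap (α := α) q) (mem_contract.mpr ⟨q, hq, rfl⟩)
    obtain ⟨q', hq', rfl⟩ := mem_contract.mp hc'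
    refine ⟨q', hq', ?_⟩
    calc q.1 = bUp α (bDown α q.1) := (sat_of_le h hq).symm
      _ ⊆ bUp α (bDown α q'.1) := bUp_mono hsub
      _ = q'.1 := sat_of_le h' hq'
  refine ⟨h.2.1, h'.2.1, href, ?_⟩
  intro q' hq'
  have hsat := sat_of_le h' hq'
  have hdich := dich_of_le h'.2.1 href hq'
  have hfe : (contract α β).filter (fun c => c.1 ⊆ (cmap (α := α) q').1)
      = (β.filter (fun q => q.1 ⊆ q'.1)).image (cmap (α := α)) := contract_filter h hsat
  have hsum : ∀ i, (∑ c ∈ (contract α β).filter (fun c => c.1 ⊆ (cmap (α := α) q').1), c.2 i)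
      = (∑ q ∈ β.filter (fun q => q.1 ⊆ q'.1), q.2 i)
        - ∑ p ∈ α.filter (fun p => p.1 ⊆ q'.1), p.2 i := by
    intro i
    rw [hfe, sum_cmap_image h _ (Finset.filter_subset _ _) (f := fun c => c.2 i),
      sum_cmap_w h hdich i]
  have hcard : ((contract α β).filter (fun c => c.1 ⊆ (cmap (α := α) q').1)).card
      = (β.filter (fun q => q.1 ⊆ q'.1)).card := by
    rw [hfe]
    exact card_cmap_image h _ (Finset.filter_subset _ _)
  have hc := hcc.2.2.2 (cmap (α := α) q') (mem_contract.mpr ⟨q', hq', rfl⟩)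
  constructor
  · intro i
    have h1 := hc.1 i
    rw [hsum i] at h1
    have h2 : (∑ p ∈ α.filter (fun p => p.1 ⊆ q'.1), p.2 i) ≤ q'.2 i :=
      (h'.2.2.2 q' hq').1 i
    have h3 := tau_le_A h hdich i
    have h4 : (cmap (α := α) q').2 i
        = q'.2 i - ∑ p ∈ α.filter (fun p => p.1 ⊆ q'.1), p.2 i := rfl
    rw [h4] at h1
    omega
  · have h1 := hc.2
    rw [hcard] at h1
    have key : ∀ i : Fin k, (cmap (α := α) q').2 i
        - (∑ c ∈ (contract α β).filter (fun c => c.1 ⊆ (cmap (α := α) q').1), c.2 i)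
        = q'.2 i - ∑ q ∈ β.filter (fun q => q.1 ⊆ q'.1), q.2 i := by
      intro i
      rw [hsum i]
      exact Nat.sub_sub_sub_cancel_right (tau_le_A h hdich i)
    rw [Finset.sum_congr rfl (fun i _ => key i)] at h1
    exact h1

lemma le_contract_iff {β β' : WP n k} (h : le α β) (h' : le α β') :
    le β β' ↔ le (contract α β) (contract α β') :=
  ⟨le_contract_of_le h h', le_of_contract_le h h'⟩

lemma sum_contract_w {β : WP n k} (h : le α β) (i : Fin k) :
    (∑ c ∈ contract α β, c.2 i) = (∑ q ∈ β, q.2 i) - ∑ p ∈ α, p.2 i := by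
  have hdich : ∀ q ∈ β, q.1 ⊆ (Finset.univ : Finset (Fin n)) ∨ Disjoint q.1 Finset.univ :=
    fun q _ => Or.inl (Finset.subset_univ _)
  have := sum_cmap_w h hdich i
  rw [Finset.filter_true_of_mem (fun q (_ : q ∈ β) => Finset.subset_univ q.1),
    Finset.filter_true_of_mem (fun p (_ : p ∈ α) => Finset.subset_univ p.1)] at this
  rw [contract, sum_cmap_image h β subset_rfl (f := fun c => c.2 i), this]

lemma sum_alpha_le {β : WP n k} (h : le α β) (i : Fin k) :
    (∑ p ∈ α, p.2 i) ≤ ∑ q ∈ β, q.2 i := by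
  have hdich : ∀ q ∈ β, q.1 ⊆ (Finset.univ : Finset (Fin n)) ∨ Disjoint q.1 Finset.univ :=
    fun q _ => Or.inl (Finset.subset_univ _)
  have := tau_le_A h hdich i
  rwa [Finset.filter_true_of_mem (fun q (_ : q ∈ β) => Finset.subset_univ q.1),
    Finset.filter_true_of_mem (fun p (_ : p ∈ α) => Finset.subset_univ p.1)] at this

lemma univ_eq_biUnion {m : ℕ} {γ : WP m k} (hγ : IsWP γ) :
    (Finset.univ : Finset (Fin m)) = γ.biUnion (fun c => c.1) := by
  ext x
  simp only [Finset.mem_univ, Finset.mem_biUnion, true_iff]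
  exact hγ.2.2.1 x

lemma sum_univ_partition {M : Type*} [AddCommMonoid M] {m : ℕ} {γ : WP m k}
    (hγ : IsWP γ) (f : Fin m → M) :
    (∑ x : Fin m, f x) = ∑ c ∈ γ, ∑ j ∈ c.1, f j := by
  rw [univ_eq_biUnion hγ]
  exact Finset.sum_biUnion (fun c hc c' hc' hne => hγ.2.1 c hc c' hc' hne)

lemma sum_blk {M : Type*} [AddCommMonoid M] (f : Finset (Fin n) × (Fin k → ℕ) → M) :
    (∑ j : Fin α.card, f (blk α j)) = ∑ p ∈ α, f p := by
  have h1 : bDown α Finset.univ = Finset.univ := by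
    ext j
    simp [mem_bDown]
  conv_lhs => rw [← h1]
  rw [sum_bDown]
  rw [Finset.filter_true_of_mem (fun p (_ : p ∈ α) => Finset.subset_univ p.1)]

lemma sum_expand_w (hα : IsWP α) {γ : WP α.card k} (hγ : IsWP γ) (i : Fin k) :
    (∑ q ∈ expand α γ, q.2 i) = (∑ c ∈ γ, c.2 i) + ∑ p ∈ α, p.2 i := by
  rw [sum_expand hα γ (f := fun q => q.2 i)]
  show (∑ c ∈ γ, (c.2 i + ∑ j ∈ c.1, (blk α j).2 i)) = _
  rw [Finset.sum_add_distrib]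
  congr 1
  rw [← sum_univ_partition hγ (fun j => (blk α j).2 i)]
  exact sum_blk (fun p => p.2 i)

end Contract3

end WP
namespace WP

noncomputable section Restrict

variable {n k : ℕ}

lemma tdown_mono {γ : Type*} [DecidableEq γ] {T : Finset γ} {m : ℕ}
    (e : {x // x ∈ T} ≃ Fin m) {S S' : Finset γ} (h : S ⊆ S') :
    tdown e S ⊆ tdown e S' :=
  fun j hj => (mem_tdown e).mpr (h ((mem_tdown e).mp hj))

def rmap (B : Finset (Fin n)) (q : Finset (Fin n) × (Fin k → ℕ)) :
    Finset (Fin B.card) × (Fin k → ℕ) := (tdown B.equivFin q.1, q.2)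

def restrict (B : Finset (Fin n)) (z : WP n k) : WP B.card k :=
  (z.filter (fun q => q.1 ⊆ B)).image (rmap B)

def gmap (B : Finset (Fin n)) (c : Finset (Fin B.card) × (Fin k → ℕ)) :
    Finset (Fin n) × (Fin k → ℕ) := (tup B.equivFin c.1, c.2)

def glue (α : WP n k) (g : ∀ p : {x // x ∈ α}, WP (p : Finset (Fin n) × (Fin k → ℕ)).1.card k) :
    WP n k :=
  α.attach.biUnion (fun p => (g p).image (gmap (p : Finset (Fin n) × (Fin k → ℕ)).1))

lemma gmap_rmap {B : Finset (Fin n)} {q : Finset (Fin n) × (Fin k → ℕ)} (h : q.1 ⊆ B) : gmap B (rmap B q) = q :=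
  Prod.ext (tup_tdown B.equivFin h) rfl

lemma rmap_gmap {B : Finset (Fin n)} {c : Finset (Fin B.card) × (Fin k → ℕ)} : rmap B (gmap B c) = c :=
  Prod.ext (tdown_tup B.equivFin c.1) rfl

lemma gmap_injective (B : Finset (Fin n)) :
    Function.Injective (gmap (k := k) B) := by
  intro c c' h
  rw [← rmap_gmap (B := B) (c := c), ← rmap_gmap (B := B) (c := c'), h]

lemma rmap_injOn (B : Finset (Fin n)) {z : WP n k} :
    ∀ q ∈ z.filter (fun q => q.1 ⊆ B), ∀ q' ∈ z.filter (fun q => q.1 ⊆ B),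
      rmap B q = rmap B q' → q = q' := by
  intro q hq q' hq' h
  rw [← gmap_rmap (Finset.mem_filter.mp hq).2, ← gmap_rmap (Finset.mem_filter.mp hq').2, h]

lemma mem_restrict {B : Finset (Fin n)} {z : WP n k} {c : Finset (Fin B.card) × (Fin k → ℕ)} :
    c ∈ restrict B z ↔ ∃ q, (q ∈ z ∧ q.1 ⊆ B) ∧ rmap B q = c := by
  simp [restrict, Finset.mem_image, Finset.mem_filter]

lemma sum_restrict {M : Type*} [AddCommMonoid M] {B : Finset (Fin n)} {z : WP n k}
    (f : Finset (Fin B.card) × (Fin k → ℕ) → M) :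
    ∑ c ∈ restrict B z, f c = ∑ q ∈ z.filter (fun q => q.1 ⊆ B), f (rmap B q) :=
  Finset.sum_image (rmap_injOn B)

lemma card_restrict {B : Finset (Fin n)} {z : WP n k} :
    (restrict B z).card = (z.filter (fun q => q.1 ⊆ B)).card :=
  Finset.card_image_of_injOn (fun q hq q' hq' => rmap_injOn B q hq q' hq')

lemma block_sub_of_le {α z : WP n k} (h : le z α) {p q} (hp : p ∈ α) (hq : q ∈ z)
    {x} (hx1 : x ∈ q.1) (hx2 : x ∈ p.1) : q.1 ⊆ p.1 := by
  obtain ⟨p', hp', hsub⟩ := h.2.2.1 q hq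
  have : p' = p := by
    by_contra hne
    exact Finset.disjoint_left.mp (h.2.1.2.1 _ hp' _ hp hne) (hsub hx1) hx2
  exact this ▸ hsub

lemma isWP_restrict {α z : WP n k} (h : le z α) {p} (hp : p ∈ α) :
    IsWP (restrict p.1 z) := by
  refine ⟨?_, ?_, ?_, ?_⟩
  · intro c hc
    obtain ⟨q, ⟨hq, hsub⟩, rfl⟩ := mem_restrict.mp hc
    rw [show (rmap p.1 q).1 = tdown p.1.equivFin q.1 from rfl]
    rw [← tup_nonempty p.1.equivFin, tup_tdown p.1.equivFin hsub]
    exact h.1.1 q hq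
  · intro c hc c' hc' hne
    obtain ⟨q, ⟨hq, hsub⟩, rfl⟩ := mem_restrict.mp hc
    obtain ⟨q', ⟨hq', hsub'⟩, rfl⟩ := mem_restrict.mp hc'
    have hqq : q ≠ q' := fun e => hne (by rw [e])
    have hd := h.1.2.1 q hq q' hq' hqq
    rw [Finset.disjoint_left]
    intro j hj hj'
    exact Finset.disjoint_left.mp hd ((mem_tdown _).mp hj) ((mem_tdown _).mp hj')
  · intro j
    have hx : (p.1.equivFin.symm j : Fin n) ∈ p.1 := (p.1.equivFin.symm j).2
    obtain ⟨q, hq, hxq⟩ := h.1.2.2.1 (p.1.equivFin.symm j : Fin n)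
    have hsub : q.1 ⊆ p.1 := block_sub_of_le h hp hq hxq hx
    exact ⟨rmap p.1 q, mem_restrict.mpr ⟨q, ⟨hq, hsub⟩, rfl⟩, (mem_tdown _).mpr hxq⟩
  · intro c hc
    obtain ⟨q, ⟨hq, hsub⟩, rfl⟩ := mem_restrict.mp hc
    show wsum q.2 + 1 = (tdown p.1.equivFin q.1).card
    rw [card_tdown p.1.equivFin hsub]
    exact h.1.2.2.2 q hq

lemma restrict_filter {z : WP n k} {B S : Finset (Fin n)} (hS : S ⊆ B) :
    (restrict B z).filter (fun c => c.1 ⊆ tdown B.equivFin S)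
      = (z.filter (fun q => q.1 ⊆ S)).image (rmap B) := by
  rw [restrict, Finset.filter_image, Finset.filter_filter]
  congr 1
  apply Finset.filter_congr
  intro q hq
  show q.1 ⊆ B ∧ tdown B.equivFin q.1 ⊆ tdown B.equivFin S ↔ q.1 ⊆ S
  constructor
  · rintro ⟨h1, h2⟩
    exact (tdown_subset_tdown B.equivFin h1).mp h2
  · intro h1
    exact ⟨h1.trans hS, tdown_mono B.equivFin h1⟩

lemma le_restrict_of_le {α z z' : WP n k} (hzα : le z α) (hz'α : le z' α)
    (hzz' : le z z') {p} (hp : p ∈ α) :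
    le (restrict p.1 z) (restrict p.1 z') := by
  refine ⟨isWP_restrict hzα hp, isWP_restrict hz'α hp, ?_, ?_⟩
  · intro c hc
    obtain ⟨q, ⟨hq, hsub⟩, rfl⟩ := mem_restrict.mp hc
    obtain ⟨q'', hq'', hsub''⟩ := hzz'.2.2.1 q hq
    obtain ⟨x, hx⟩ := hzz'.1.1 q hq
    have hsubB : q''.1 ⊆ p.1 := block_sub_of_le hz'α hp hq'' (hsub'' hx) (hsub hx)
    exact ⟨rmap p.1 q'', mem_restrict.mpr ⟨q'', ⟨hq'', hsubB⟩, rfl⟩,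
      tdown_mono p.1.equivFin hsub''⟩
  · intro c' hc'
    obtain ⟨q', ⟨hq', hsub'⟩, rfl⟩ := mem_restrict.mp hc'
    have hfe : (restrict p.1 z).filter (fun c => c.1 ⊆ (rmap p.1 q').1)
        = (z.filter (fun q => q.1 ⊆ q'.1)).image (rmap p.1) := restrict_filter hsub'
    have hsum : ∀ i, (∑ c ∈ (restrict p.1 z).filter (fun c => c.1 ⊆ (rmap p.1 q').1), c.2 i)
        = ∑ q ∈ z.filter (fun q => q.1 ⊆ q'.1), q.2 i := by
      intro i
      rw [hfe]
      exact Finset.sum_image (fun q hq qq hqq e => rmap_injOn p.1 q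
        (Finset.mem_filter.mpr ⟨(Finset.mem_filter.mp hq).1,
          (Finset.mem_filter.mp hq).2.trans hsub'⟩) qq
        (Finset.mem_filter.mpr ⟨(Finset.mem_filter.mp hqq).1,
          (Finset.mem_filter.mp hqq).2.trans hsub'⟩) e)
    have hcard : ((restrict p.1 z).filter (fun c => c.1 ⊆ (rmap p.1 q').1)).card
        = (z.filter (fun q => q.1 ⊆ q'.1)).card := by
      rw [hfe]
      exact Finset.card_image_of_injOn (fun q hq qq hqq e => rmap_injOn p.1 q
        (Finset.mem_filter.mpr ⟨(Finset.mem_filter.mp hq).1,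
          (Finset.mem_filter.mp hq).2.trans hsub'⟩) qq
        (Finset.mem_filter.mpr ⟨(Finset.mem_filter.mp hqq).1,
          (Finset.mem_filter.mp hqq).2.trans hsub'⟩) e)
    have hcond := hzz'.2.2.2 q' hq'
    constructor
    · intro i
      rw [hsum i]
      exact hcond.1 i
    · rw [hcard, Finset.sum_congr rfl (fun i _ => by rw [hsum i])]
      exact hcond.2

lemma le_of_restrict_le {α z z' : WP n k} (hα : IsWP α) (hzα : le z α) (hz'α : le z' α)
    (hres : ∀ p, (hp : p ∈ α) → le (restrict p.1 z) (restrict p.1 z')) : le z z' := by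
  refine ⟨hzα.1, hz'α.1, ?_, ?_⟩
  · intro q hq
    obtain ⟨p, hp, hsub⟩ := hzα.2.2.1 q hq
    have hc : rmap p.1 q ∈ restrict p.1 z := mem_restrict.mpr ⟨q, ⟨hq, hsub⟩, rfl⟩
    obtain ⟨c', hc', hsubc⟩ := (hres p hp).2.2.1 _ hc
    obtain ⟨q'', ⟨hq'', hsub''⟩, rfl⟩ := mem_restrict.mp hc'
    refine ⟨q'', hq'', ?_⟩
    have : tdown p.1.equivFin q.1 ⊆ tdown p.1.equivFin q''.1 := hsubc
    exact (tdown_subset_tdown p.1.equivFin hsub).mp this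
  · intro q' hq'
    obtain ⟨p, hp, hsub'⟩ := hz'α.2.2.1 q' hq'
    have hc' : rmap p.1 q' ∈ restrict p.1 z' := mem_restrict.mpr ⟨q', ⟨hq', hsub'⟩, rfl⟩
    have hfe : (restrict p.1 z).filter (fun c => c.1 ⊆ (rmap p.1 q').1)
        = (z.filter (fun q => q.1 ⊆ q'.1)).image (rmap p.1) := restrict_filter hsub'
    have hsum : ∀ i, (∑ c ∈ (restrict p.1 z).filter (fun c => c.1 ⊆ (rmap p.1 q').1), c.2 i)
        = ∑ q ∈ z.filter (fun q => q.1 ⊆ q'.1), q.2 i := by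
      intro i
      rw [hfe]
      exact Finset.sum_image (fun q hq qq hqq e => rmap_injOn p.1 q
        (Finset.mem_filter.mpr ⟨(Finset.mem_filter.mp hq).1,
          (Finset.mem_filter.mp hq).2.trans hsub'⟩) qq
        (Finset.mem_filter.mpr ⟨(Finset.mem_filter.mp hqq).1,
          (Finset.mem_filter.mp hqq).2.trans hsub'⟩) e)
    have hcard : ((restrict p.1 z).filter (fun c => c.1 ⊆ (rmap p.1 q').1)).card
        = (z.filter (fun q => q.1 ⊆ q'.1)).card := by
      rw [hfe]
      exact Finset.card_image_of_injOn (fun q hq qq hqq e => rmap_injOn p.1 q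
        (Finset.mem_filter.mpr ⟨(Finset.mem_filter.mp hq).1,
          (Finset.mem_filter.mp hq).2.trans hsub'⟩) qq
        (Finset.mem_filter.mpr ⟨(Finset.mem_filter.mp hqq).1,
          (Finset.mem_filter.mp hqq).2.trans hsub'⟩) e)
    have hcond := (hres p hp).2.2.2 _ hc'
    constructor
    · intro i
      have := hcond.1 i
      rwa [hsum i] at this
    · have := hcond.2
      rwa [hcard, Finset.sum_congr rfl (fun i _ => by rw [hsum i])] at this

end Restrict

end WP
namespace WP

noncomputable section Glue

variable {n k : ℕ} {α : WP n k}

lemma mem_glue {g : ∀ p : {x // x ∈ α}, WP (p : Finset (Fin n) × (Fin k → ℕ)).1.card k}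
    {q : Finset (Fin n) × (Fin k → ℕ)} :
    q ∈ glue α g ↔ ∃ p : {x // x ∈ α}, ∃ c ∈ g p,
      gmap (p : Finset (Fin n) × (Fin k → ℕ)).1 c = q := by
  simp [glue, Finset.mem_biUnion, Finset.mem_image, Finset.mem_attach]

lemma glue_restrict {z : WP n k} (hzα : le z α) :
    glue α (fun p => restrict (p : Finset (Fin n) × (Fin k → ℕ)).1 z) = z := by
  ext q
  rw [mem_glue]
  constructor
  · rintro ⟨p, c, hc, rfl⟩
    obtain ⟨q₀, ⟨hq₀, hsub⟩, rfl⟩ := mem_restrict.mp hc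
    rw [gmap_rmap hsub]
    exact hq₀
  · intro hq
    obtain ⟨pp, hpp, hsub⟩ := hzα.2.2.1 q hq
    exact ⟨⟨pp, hpp⟩, rmap pp.1 q, mem_restrict.mpr ⟨q, ⟨hq, hsub⟩, rfl⟩, gmap_rmap hsub⟩

lemma restrict_glue (hα : IsWP α)
    {g : ∀ p : {x // x ∈ α}, WP (p : Finset (Fin n) × (Fin k → ℕ)).1.card k}
    (hg : ∀ p, IsWP (g p)) (p : {x // x ∈ α}) :
    restrict (p : Finset (Fin n) × (Fin k → ℕ)).1 (glue α g) = g p := by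
  ext c
  rw [mem_restrict]
  constructor
  · rintro ⟨q, ⟨hq, hsub⟩, rfl⟩
    obtain ⟨p', c', hc', rfl⟩ := mem_glue.mp hq
    have hpp : p' = p := by
      obtain ⟨j, hj⟩ := (hg p').1 c' hc'
      have hx : ((p' : Finset (Fin n) × (Fin k → ℕ)).1.equivFin.symm j : Fin n)
          ∈ (gmap (p' : Finset (Fin n) × (Fin k → ℕ)).1 c').1 :=
        (mem_tup _).mpr ⟨j, hj, rfl⟩
      have hx1 : ((p' : Finset (Fin n) × (Fin k → ℕ)).1.equivFin.symm j : Fin n)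
          ∈ (p' : Finset (Fin n) × (Fin k → ℕ)).1 := tup_subset _ _ hx
      have hx2 := hsub hx
      apply Subtype.ext
      by_contra hne
      exact Finset.disjoint_left.mp
        (hα.2.1 _ p'.2 _ p.2 (fun e => hne e)) hx1 hx2
    subst hpp
    rw [rmap_gmap]
    exact hc'
  · intro hc
    refine ⟨gmap (p : Finset (Fin n) × (Fin k → ℕ)).1 c,
      ⟨mem_glue.mpr ⟨p, c, hc, rfl⟩, tup_subset _ _⟩, rmap_gmap⟩

lemma isWP_glue (hα : IsWP α)
    {g : ∀ p : {x // x ∈ α}, WP (p : Finset (Fin n) × (Fin k → ℕ)).1.card k}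
    (hg : ∀ p, IsWP (g p)) : IsWP (glue α g) := by
  refine ⟨?_, ?_, ?_, ?_⟩
  · intro q hq
    obtain ⟨p, c, hc, rfl⟩ := mem_glue.mp hq
    exact (tup_nonempty _).mpr ((hg p).1 c hc)
  · intro q hq q' hq' hne
    obtain ⟨p, c, hc, rfl⟩ := mem_glue.mp hq
    obtain ⟨p', c', hc', rfl⟩ := mem_glue.mp hq'
    by_cases hpp : p = p'
    · subst hpp
      have hcc : c ≠ c' := fun e => hne (by rw [e])
      exact (disjoint_tup _).mpr ((hg p).2.1 c hc c' hc' hcc)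
    · have hd : Disjoint (p : Finset (Fin n) × (Fin k → ℕ)).1
          (p' : Finset (Fin n) × (Fin k → ℕ)).1 :=
        hα.2.1 _ p.2 _ p'.2 (fun e => hpp (Subtype.ext e))
      exact Finset.disjoint_of_subset_left (tup_subset _ _)
        (Finset.disjoint_of_subset_right (tup_subset _ _) hd)
  · intro x
    obtain ⟨p₀, hp₀, hxp⟩ := hα.2.2.1 x
    set p : {x // x ∈ α} := ⟨p₀, hp₀⟩
    set j := (p : Finset (Fin n) × (Fin k → ℕ)).1.equivFin ⟨x, hxp⟩
    obtain ⟨c, hc, hjc⟩ := (hg p).2.2.1 j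
    refine ⟨gmap (p : Finset (Fin n) × (Fin k → ℕ)).1 c, mem_glue.mpr ⟨p, c, hc, rfl⟩, ?_⟩
    exact (mem_tup _).mpr ⟨j, hjc, by simp [j]⟩
  · intro q hq
    obtain ⟨p, c, hc, rfl⟩ := mem_glue.mp hq
    show wsum c.2 + 1 = (tup _ c.1).card
    rw [card_tup]
    exact (hg p).2.2.2 c hc

lemma glue_filter (hα : IsWP α)
    {g : ∀ p : {x // x ∈ α}, WP (p : Finset (Fin n) × (Fin k → ℕ)).1.card k}
    (hg : ∀ p, IsWP (g p)) (p : {x // x ∈ α}) :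
    (glue α g).filter (fun q => q.1 ⊆ (p : Finset (Fin n) × (Fin k → ℕ)).1)
      = (g p).image (gmap (p : Finset (Fin n) × (Fin k → ℕ)).1) := by
  ext q
  rw [Finset.mem_filter, Finset.mem_image]
  constructor
  · rintro ⟨hq, hsub⟩
    obtain ⟨p', c', hc', rfl⟩ := mem_glue.mp hq
    have hpp : p' = p := by
      obtain ⟨j, hj⟩ := (hg p').1 c' hc'
      have hx : ((p' : Finset (Fin n) × (Fin k → ℕ)).1.equivFin.symm j : Fin n)
          ∈ (gmap (p' : Finset (Fin n) × (Fin k → ℕ)).1 c').1 :=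
        (mem_tup _).mpr ⟨j, hj, rfl⟩
      apply Subtype.ext
      by_contra hne
      exact Finset.disjoint_left.mp (hα.2.1 _ p'.2 _ p.2 (fun e => hne e))
        (tup_subset _ _ hx) (hsub hx)
    subst hpp
    exact ⟨c', hc', rfl⟩
  · rintro ⟨c, hc, rfl⟩
    exact ⟨mem_glue.mpr ⟨p, c, hc, rfl⟩, tup_subset _ _⟩

lemma le_glue_alpha (hα : IsWP α)
    {g : ∀ p : {x // x ∈ α}, WP (p : Finset (Fin n) × (Fin k → ℕ)).1.card k}
    (hg : ∀ p, IsWP (g p))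
    (hgt : ∀ p, le (g p) (top (p : Finset (Fin n) × (Fin k → ℕ)).1.card k
      (p : Finset (Fin n) × (Fin k → ℕ)).2)) :
    le (glue α g) α := by
  refine ⟨isWP_glue hα hg, hα, ?_, ?_⟩
  · intro q hq
    obtain ⟨p, c, hc, rfl⟩ := mem_glue.mp hq
    exact ⟨(p : Finset (Fin n) × (Fin k → ℕ)), p.2, tup_subset _ _⟩
  · intro p₀ hp₀
    set p : {x // x ∈ α} := ⟨p₀, hp₀⟩
    have hfe := glue_filter hα hg p
    have hinj : ∀ c ∈ g p, ∀ c' ∈ g p,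
        gmap (p : Finset (Fin n) × (Fin k → ℕ)).1 c
          = gmap (p : Finset (Fin n) × (Fin k → ℕ)).1 c' → c = c' :=
      fun c _ c' _ e => gmap_injective _ e
    have hsum : ∀ i, (∑ q ∈ (glue α g).filter (fun q => q.1 ⊆ p₀.1), q.2 i)
        = ∑ c ∈ g p, c.2 i := by
      intro i
      rw [hfe]
      exact Finset.sum_image hinj
    have hcard : ((glue α g).filter (fun q => q.1 ⊆ p₀.1)).card = (g p).card := by
      rw [hfe]
      exact Finset.card_image_of_injOn (fun c hc c' hc' => hinj c hc c' hc')
    have htop := hgt p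
    have hfix : (g p).filter
        (fun c => c.1 ⊆ (Finset.univ : Finset (Fin p₀.1.card))) = g p :=
      Finset.filter_true_of_mem (fun c _ => Finset.subset_univ _)
    have hcond := htop.2.2.2 (Finset.univ, p₀.2) (by simp [top]; rfl)
    rw [hfix] at hcond
    constructor
    · intro i
      rw [hsum i]
      exact hcond.1 i
    · rw [hcard, Finset.sum_congr rfl (fun i _ => by rw [hsum i])]
      exact hcond.2

lemma le_restrict_top {z : WP n k} (hzα : le z α) {p} (hp : p ∈ α) :
    le (restrict p.1 z) (top p.1.card k p.2) := by
  have hcard : 1 ≤ p.1.card := Finset.card_pos.mpr (hzα.2.1.1 p hp)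
  have htop : IsWP (top p.1.card k p.2) := isWP_top hcard p.2 (hzα.2.1.2.2.2 p hp)
  rw [le_top_iff p.2 htop]
  have hcond := hzα.2.2.2 p hp
  have hsum : ∀ i, (∑ c ∈ restrict p.1 z, c.2 i)
      = ∑ q ∈ z.filter (fun q => q.1 ⊆ p.1), q.2 i :=
    fun i => sum_restrict (fun c => c.2 i)
  refine ⟨isWP_restrict hzα hp, ?_, ?_⟩
  · intro i
    rw [hsum i]
    exact hcond.1 i
  · rw [card_restrict, Finset.sum_congr rfl (fun i _ => by rw [hsum i])]
    exact hcond.2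

end Glue

end WP
namespace WP

section TopInterval

variable {n k : ℕ} {α : WP n k}

lemma contract_le_top {β : WP n k} {ν : Fin k → ℕ} (hn : 1 ≤ n) (h : le α β)
    (hβt : le β (top n k ν)) (hν : wsum ν + 1 = n) (hcard : 1 ≤ α.card)
    (hsum : (∑ i, (ν i - ∑ p ∈ α, p.2 i)) = α.card - 1) :
    le (contract α β) (top α.card k (fun i => ν i - ∑ p ∈ α, p.2 i)) := by
  have htopn : IsWP (top n k ν) := isWP_top hn ν hν
  have h2 := (le_top_iff ν htopn β).mp hβt
  have htop' : IsWP (top α.card k (fun i => ν i - ∑ p ∈ α, p.2 i)) := by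
    apply isWP_top hcard
    show (∑ i, (ν i - ∑ p ∈ α, p.2 i)) + 1 = α.card
    omega
  rw [le_top_iff _ htop']
  refine ⟨isWP_contract h, ?_, ?_⟩
  · intro i
    rw [sum_contract_w h i]
    exact Nat.sub_le_sub_right (h2.2.1 i) _
  · rw [card_contract h]
    have key : ∀ i : Fin k, (ν i - ∑ p ∈ α, p.2 i) - (∑ c ∈ contract α β, c.2 i)
        = ν i - ∑ q ∈ β, q.2 i := by
      intro i
      rw [sum_contract_w h i]
      exact Nat.sub_sub_sub_cancel_right (sum_alpha_le h i)
    rw [Finset.sum_congr rfl (fun i _ => key i)]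
    exact h2.2.2

lemma expand_le_top {γ : WP α.card k} {ν : Fin k → ℕ} (hn : 1 ≤ n) (hα : IsWP α)
    (hγ : IsWP γ) (hν : wsum ν + 1 = n) (hcard : 1 ≤ α.card)
    (hγt : le γ (top α.card k (fun i => ν i - ∑ p ∈ α, p.2 i)))
    (hwle : ∀ i, (∑ p ∈ α, p.2 i) ≤ ν i)
    (hsum : (∑ i, (ν i - ∑ p ∈ α, p.2 i)) = α.card - 1) :
    le (expand α γ) (top n k ν) := by
  have htop' : IsWP (top α.card k (fun i => ν i - ∑ p ∈ α, p.2 i)) := by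
    apply isWP_top hcard
    show (∑ i, (ν i - ∑ p ∈ α, p.2 i)) + 1 = α.card
    omega
  have h2 := (le_top_iff _ htop' γ).mp hγt
  rw [le_top_iff ν (isWP_top hn ν hν)]
  refine ⟨isWP_expand hα hγ, ?_, ?_⟩
  · intro i
    rw [sum_expand_w hα hγ i]
    have h3 := h2.2.1 i
    have h4 := hwle i
    omega
  · rw [card_expand hα]
    have key : ∀ i : Fin k, ν i - (∑ q ∈ expand α γ, q.2 i)
        = (ν i - ∑ p ∈ α, p.2 i) - (∑ c ∈ γ, c.2 i) := by
      intro i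
      rw [sum_expand_w hα hγ i]
      omega
    rw [Finset.sum_congr rfl (fun i _ => key i)]
    have h5 := h2.2.2
    simpa using h5

end TopInterval

end WP

/-- Structure of upper and lower intervals in the weighted partition poset:
for `α = {A₁^{μ₁},…,A_s^{μ_s}} ∈ Π̂_n^k` with `α ≠ 1̂` (so `α ∈ Π_n^k`, `s = α.card`):
(1) `[α, 1̂] ≅ Π̂_s^k`;
(2) for `ν ∈ wcomp_{n-1}` with `ν - μ(α) ∈ wcomp_{s-1}`,
    `[α, [n]^ν] ≅ [0̂, [s]^{ν - μ(α)}]` in `Π_s^k`;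
(3) `[0̂, α] ≅ [0̂, [|A₁|]^{μ₁}] × ⋯ × [0̂, [|A_s|]^{μ_s}]`. -/
theorem weighted_partition_interval_structure
    (n k : ℕ) (hn : 1 ≤ n) (hk : 1 ≤ k) (α : WP n k) (hα : WP.IsWP α) :
    (∃ e : {z : Option (WP n k) // IsWPHat z ∧ hatLE (some α) z} ≃
           {z : Option (WP α.card k) // IsWPHat z},
        ∀ z z', hatLE z.1 z'.1 ↔ hatLE (e z).1 (e z').1) ∧
    (∀ ν : Fin k → ℕ, (∑ i, ν i) = n - 1 →
      (∀ i, WP.wtot α i ≤ ν i) → (∑ i, (ν i - WP.wtot α i)) = α.card - 1 →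
      ∃ e : {z : WP n k // WP.le α z ∧ WP.le z (WP.top n k ν)} ≃
            {z : WP α.card k // WP.le (WP.bot α.card k) z ∧
              WP.le z (WP.top α.card k (fun i => ν i - WP.wtot α i))},
        ∀ z z', WP.le z.1 z'.1 ↔ WP.le (e z).1 (e z').1) ∧
    (∃ e : {z : WP n k // WP.le (WP.bot n k) z ∧ WP.le z α} ≃
           ((p : α) → {z : WP p.1.1.card k // WP.le (WP.bot p.1.1.card k) z ∧
              WP.le z (WP.top p.1.1.card k p.1.2)}),
        ∀ z z', WP.le z.1 z'.1 ↔ ∀ p, WP.le ((e z) p).1 ((e z') p).1) := by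
  have hcard : 1 ≤ α.card := by
    obtain ⟨p, hp, -⟩ := hα.2.2.1 ⟨0, hn⟩
    exact Finset.card_pos.mpr ⟨p, hp⟩
  refine ⟨?_, ?_, ?_⟩
  · -- Part (1): [α, 1̂] ≅ Π̂_s^k
    refine ⟨⟨fun z => match z with
      | ⟨none, _⟩ => ⟨none, trivial⟩
      | ⟨some β, h⟩ => ⟨some (WP.contract α β), WP.isWP_contract h.2⟩,
      fun z => match z with
      | ⟨none, _⟩ => ⟨none, trivial, trivial⟩
      | ⟨some γ, hγ⟩ => ⟨some (WP.expand α γ), WP.isWP_expand hα hγ,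
          WP.le_alpha_expand hα hγ⟩,
      ?_, ?_⟩, ?_⟩
    · rintro ⟨z, hz⟩
      cases z with
      | none => rfl
      | some β => exact Subtype.ext (congrArg some (WP.expand_contract hz.2))
    · rintro ⟨z, hz⟩
      cases z with
      | none => rfl
      | some γ => exact Subtype.ext (congrArg some (WP.contract_expand hα))
    · rintro ⟨z, hz⟩ ⟨z', hz'⟩
      cases z with
      | none =>
        cases z' with
        | none => exact Iff.rfl
        | some β' => exact Iff.rfl
      | some β =>
        cases z' with
        | none => exact Iff.rfl
        | some β' => exact WP.le_contract_iff hz.2 hz'.2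
  · -- Part (2): [α, [n]^ν] ≅ [0̂, [s]^{ν-μ(α)}]
    intro ν hν hwle hsum
    have hνn : WP.wsum ν + 1 = n := by
      show (∑ i, ν i) + 1 = n
      omega
    refine ⟨⟨fun z => ⟨WP.contract α z.1,
        (WP.le_bot_iff _).mpr (WP.isWP_contract z.2.1),
        WP.contract_le_top hn z.2.1 z.2.2 hνn hcard hsum⟩,
      fun γ => ⟨WP.expand α γ.1,
        WP.le_alpha_expand hα ((WP.le_bot_iff _).mp γ.2.1),
        WP.expand_le_top hn hα ((WP.le_bot_iff _).mp γ.2.1) hνn hcard γ.2.2 hwle hsum⟩,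
      fun z => Subtype.ext (WP.expand_contract z.2.1),
      fun γ => Subtype.ext (WP.contract_expand hα)⟩,
      fun z z' => WP.le_contract_iff z.2.1 z'.2.1⟩
  · -- Part (3): [0̂, α] ≅ ∏_p [0̂, [|A_p|]^{μ_p}]
    refine ⟨⟨fun z => fun p => ⟨WP.restrict p.1.1 z.1,
        (WP.le_bot_iff _).mpr (WP.isWP_restrict z.2.2 p.2),
        WP.le_restrict_top z.2.2 p.2⟩,
      fun g => ⟨WP.glue α (fun p => (g p).1),
        (WP.le_bot_iff _).mpr
          (WP.isWP_glue hα (fun p => (WP.le_bot_iff _).mp (g p).2.1)),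
        WP.le_glue_alpha hα (fun p => (WP.le_bot_iff _).mp (g p).2.1)
          (fun p => (g p).2.2)⟩,
      fun z => Subtype.ext (WP.glue_restrict z.2.2),
      fun g => funext (fun p => Subtype.ext
        (WP.restrict_glue hα (fun p' => (WP.le_bot_iff _).mp (g p').2.1) p))⟩,
      fun z z' => ⟨fun h p => WP.le_restrict_of_le z.2.2 z'.2.2 h p.2,
        fun h => WP.le_of_restrict_le hα z.2.2 z'.2.2 (fun p hp => h ⟨p, hp⟩)⟩⟩
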